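/- Let A = (a_ij) be a symmetric m×m real matrix with nonnegative entries. There exists a stochastic matrix T such that A = (1/2)(T + Tᵀ) if and only if ∑_{i∈α} ∑_{j∈α} a_ij ≤ |α| for every subset α ⊆ {1,...,m} and ∑_{i,j=1}^m a_ij = m. -/

import Mathlib

/-- A (row-)stochastic matrix. -/
def IsStochastic (m : ℕ) (T : Matrix (Fin m) (Fin m) ℝ) : Prop :=
  (∀ i j, 0 ≤ T i j) ∧ ∀ i, ∑ j, T i j = 1

open Finset in
lemma key_aux (m : ℕ) (A : Matrix (Fin m) (Fin m) ℝ)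
    (hblock : ∀ α : Finset (Fin m), ∑ i ∈ α, ∑ j ∈ α, A i j ≤ (α.card : ℝ))
    (htot : ∑ i, ∑ j, A i j = (m : ℝ)) :
    ∀ (k : ℕ) (y : Fin m → ℝ), (Finset.univ.image y).card ≤ k →
      ∑ i, y i ≤ ∑ i, ∑ j, A i j * max (y i) (y j) := by
  intro k
  induction k with
  | zero =>
    intro y hy
    have h0 : (Finset.univ.image y) = ∅ := Finset.card_eq_zero.mp (Nat.le_zero.mp hy)
    have h1 : (Finset.univ : Finset (Fin m)) = ∅ := Finset.image_eq_empty.mp h0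
    simp [h1]
  | succ k ih =>
    intro y hy
    by_cases hk : (Finset.univ.image y).card ≤ k
    · exact ih y hk
    have hcard : (Finset.univ.image y).card = k + 1 := le_antisymm hy (not_le.mp hk)
    -- the image is nonempty
    have hne : (Finset.univ.image y).Nonempty := by
      rw [← Finset.card_pos, hcard]; omega
    by_cases hone : (Finset.univ.image y).card ≤ 1
    · -- constant case
      obtain ⟨c, hc⟩ := Finset.card_eq_one.mp (le_antisymm hone hne.card_pos)
      have hyc : ∀ i, y i = c := by
        intro i
        have : y i ∈ Finset.univ.image y := Finset.mem_image_of_mem y (Finset.mem_univ i)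
        rw [hc] at this
        exact Finset.mem_singleton.mp this
      have h1 : ∑ i, y i = (m : ℝ) * c := by
        simp [hyc, mul_comm]
      have h2 : ∑ i, ∑ j, A i j * max (y i) (y j) = (m : ℝ) * c := by
        calc ∑ i, ∑ j, A i j * max (y i) (y j) = ∑ i, ∑ j, A i j * c := by
              apply Finset.sum_congr rfl; intro i _
              apply Finset.sum_congr rfl; intro j _
              rw [hyc i, hyc j, max_self]
          _ = (∑ i, ∑ j, A i j) * c := by rw [Finset.sum_mul]; simp [Finset.sum_mul]
          _ = (m : ℝ) * c := by rw [htot]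
      rw [h1, h2]
    -- main case: at least two values
    push_neg at hone
    set v : ℝ := (Finset.univ.image y).max' hne with hv
    have hSne : ((Finset.univ.image y).erase v).Nonempty := by
      rw [← Finset.card_pos, Finset.card_erase_of_mem ((Finset.univ.image y).max'_mem hne)]
      omega
    set u : ℝ := ((Finset.univ.image y).erase v).max' hSne with hu
    have huv : u < v := by
      have h1 : u ∈ (Finset.univ.image y).erase v := Finset.max'_mem _ hSne
      have h2 : u ≤ v := Finset.le_max' _ _ (Finset.mem_of_mem_erase h1)
      exact lt_of_le_of_ne h2 (Finset.ne_of_mem_erase h1)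
    have hle : ∀ i, y i ≠ v → y i ≤ u := by
      intro i hi
      apply Finset.le_max'
      exact Finset.mem_erase.mpr ⟨hi, Finset.mem_image_of_mem y (Finset.mem_univ i)⟩
    have hlev : ∀ i, y i ≤ v := fun i =>
      Finset.le_max' _ _ (Finset.mem_image_of_mem y (Finset.mem_univ i))
    set y' : Fin m → ℝ := fun i => min (y i) u with hy'
    -- the new function takes fewer values
    have himg : (Finset.univ.image y').card ≤ k := by
      have hsub : Finset.univ.image y' ⊆ (Finset.univ.image y).erase v := by
        intro a ha
        obtain ⟨i, _, rfl⟩ := Finset.mem_image.mp ha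
        by_cases hiv : y i = v
        · have : y' i = u := by simp [hy', hiv, min_eq_right huv.le]
          rw [this]; exact Finset.max'_mem _ hSne
        · have : y' i = y i := by simp [hy', min_eq_left (hle i hiv)]
          rw [this]
          exact Finset.mem_erase.mpr ⟨hiv, Finset.mem_image_of_mem y (Finset.mem_univ i)⟩
      calc (Finset.univ.image y').card ≤ ((Finset.univ.image y).erase v).card :=
            Finset.card_le_card hsub
        _ = k := by
            rw [Finset.card_erase_of_mem ((Finset.univ.image y).max'_mem hne), hcard]
            omega
    have ihy' := ih y' himg
    set α : Finset (Fin m) := Finset.univ.filter (fun i => y i ≠ v) with hα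
    set β : Finset (Fin m) := Finset.univ.filter (fun i => y i = v) with hβ
    have hcards : α.card + β.card = m := by
      have h := Finset.card_filter_add_card_filter_not
        (s := (Finset.univ : Finset (Fin m))) (p := fun i => y i = v)
      simp only [Finset.card_univ, Fintype.card_fin] at h
      rw [hα, hβ]
      have hfe : Finset.univ.filter (fun i => y i ≠ v)
          = Finset.univ.filter (fun i => ¬ (y i = v)) := rfl
      rw [hfe]
      omega
    -- difference of left sides
    have hL : ∑ i, y i - ∑ i, y' i = (v - u) * (β.card : ℝ) := by
      rw [← Finset.sum_sub_distrib]
      have : ∀ i, y i - y' i = if y i = v then v - u else 0 := by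
        intro i
        by_cases hiv : y i = v
        · simp [hy', hiv, min_eq_right huv.le]
        · simp [hy', min_eq_left (hle i hiv), hiv]
      rw [Finset.sum_congr rfl (fun i _ => this i), ← Finset.sum_filter, ← hβ,
        Finset.sum_const, nsmul_eq_mul, mul_comm]
    have hterm : ∀ i j, A i j * max (y i) (y j) - A i j * max (y' i) (y' j)
        = A i j * (v - u) - (if y i ≠ v ∧ y j ≠ v then A i j * (v - u) else 0) := by
      intro i j
      by_cases hij : y i ≠ v ∧ y j ≠ v
      · rw [if_pos hij]
        have h1 : y' i = y i := min_eq_left (hle i hij.1)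
        have h2 : y' j = y j := min_eq_left (hle j hij.2)
        rw [h1, h2]; ring
      · rw [if_neg hij]
        have hmaxv : max (y i) (y j) = v := by
          rcases not_and_or.mp hij with h | h
          · push_neg at h; rw [h]; exact max_eq_left (hlev j)
          · push_neg at h; rw [h]; exact max_eq_right (hlev i)
        have hmaxu : max (y' i) (y' j) = u := by
          have hyu' : ∀ l, y' l ≤ u := fun l => min_le_right _ _
          rcases not_and_or.mp hij with h | h
          · push_neg at h
            have h1 : y' i = u := by simp [hy', h, min_eq_right huv.le]
            rw [h1]; exact max_eq_left (hyu' j)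
          · push_neg at h
            have h1 : y' j = u := by simp [hy', h, min_eq_right huv.le]
            rw [h1]; exact max_eq_right (hyu' i)
        rw [hmaxv, hmaxu]; ring
    have hR : (∑ i, ∑ j, A i j * max (y i) (y j)) - (∑ i, ∑ j, A i j * max (y' i) (y' j))
        = (v - u) * ((m : ℝ) - ∑ i ∈ α, ∑ j ∈ α, A i j) := by
      have e1 : ∑ i, ∑ j, A i j * (v - u) = (m : ℝ) * (v - u) := by
        rw [← htot]
        simp [Finset.sum_mul]
      have e2 : ∑ i, ∑ j, (if y i ≠ v ∧ y j ≠ v then A i j * (v - u) else 0)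
          = (∑ i ∈ α, ∑ j ∈ α, A i j) * (v - u) := by
        have step1 : ∀ i, (∑ j, if y i ≠ v ∧ y j ≠ v then A i j * (v - u) else 0)
            = (if y i ≠ v then ∑ j, (if y j ≠ v then A i j * (v - u) else 0) else 0) := by
          intro i
          by_cases h : y i ≠ v
          · rw [if_pos h]
            exact Finset.sum_congr rfl fun j _ => by
              by_cases h2 : y j ≠ v
              · rw [if_pos ⟨h, h2⟩, if_pos h2]
              · rw [if_neg (fun hc => h2 hc.2), if_neg h2]
          · rw [if_neg h]
            apply Finset.sum_eq_zero
            intro j _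
            exact if_neg (fun hc => h hc.1)
        rw [Finset.sum_congr rfl fun i _ => step1 i, ← Finset.sum_filter, ← hα,
          Finset.sum_congr rfl (fun i _ => (Finset.sum_filter _ _).symm)]
        simp [Finset.sum_mul]
        rfl
      calc (∑ i, ∑ j, A i j * max (y i) (y j)) - (∑ i, ∑ j, A i j * max (y' i) (y' j))
          = ∑ i, ∑ j, (A i j * max (y i) (y j) - A i j * max (y' i) (y' j)) := by
            rw [← Finset.sum_sub_distrib]
            exact Finset.sum_congr rfl fun i _ => (Finset.sum_sub_distrib _ _).symm
        _ = ∑ i, ∑ j, (A i j * (v - u) - (if y i ≠ v ∧ y j ≠ v then A i j * (v - u) else 0)) :=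
            Finset.sum_congr rfl fun i _ => Finset.sum_congr rfl fun j _ => hterm i j
        _ = (∑ i, ∑ j, A i j * (v - u))
              - ∑ i, ∑ j, (if y i ≠ v ∧ y j ≠ v then A i j * (v - u) else 0) := by
            rw [← Finset.sum_sub_distrib]
            exact Finset.sum_congr rfl fun i _ => Finset.sum_sub_distrib _ _
        _ = (v - u) * ((m : ℝ) - ∑ i ∈ α, ∑ j ∈ α, A i j) := by rw [e1, e2]; ring
    have h4 : ∑ i ∈ α, ∑ j ∈ α, A i j ≤ (α.card : ℝ) := hblock α
    have h5 : (α.card : ℝ) + (β.card : ℝ) = (m : ℝ) := by exact_mod_cast hcards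
    have h7 : (v - u) * (β.card : ℝ) ≤ (v - u) * ((m : ℝ) - ∑ i ∈ α, ∑ j ∈ α, A i j) := by
      apply mul_le_mul_of_nonneg_left _ (by linarith)
      linarith
    linarith [ihy', hL, hR, h7]

/-- A symmetric nonnegative matrix `A` is the symmetrization of a stochastic matrix iff
all its principal-block sums are at most the block size and its total sum is `m`. -/
theorem symmetrization_of_stochastic_iff (m : ℕ) (A : Matrix (Fin m) (Fin m) ℝ)
    (hsym : A.IsSymm) (hpos : ∀ i j, 0 ≤ A i j) :
    (∃ T, IsStochastic m T ∧ A = (1 / 2 : ℝ) • (T + T.transpose)) ↔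
      ((∀ α : Finset (Fin m), ∑ i ∈ α, ∑ j ∈ α, A i j ≤ (α.card : ℝ)) ∧
        ∑ i, ∑ j, A i j = (m : ℝ)) := by
  have hsm : ∀ i j, A j i = A i j := fun i j => hsym.apply i j
  constructor
  · rintro ⟨T, ⟨hT0, hT1⟩, hA⟩
    have hAij : ∀ i j, A i j = (T i j + T j i) / 2 := by
      intro i j
      rw [hA]
      simp [Matrix.smul_apply, Matrix.add_apply, Matrix.transpose_apply]
      ring
    have hblockT : ∀ α : Finset (Fin m), ∑ i ∈ α, ∑ j ∈ α, A i j = ∑ i ∈ α, ∑ j ∈ α, T i j := by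
      intro α
      have hsw : ∑ i ∈ α, ∑ j ∈ α, T j i = ∑ i ∈ α, ∑ j ∈ α, T i j := Finset.sum_comm
      calc ∑ i ∈ α, ∑ j ∈ α, A i j = ∑ i ∈ α, ∑ j ∈ α, (T i j / 2 + T j i / 2) := by
            refine Finset.sum_congr rfl fun i _ => Finset.sum_congr rfl fun j _ => ?_
            rw [hAij i j]; ring
        _ = (∑ i ∈ α, ∑ j ∈ α, T i j / 2) + ∑ i ∈ α, ∑ j ∈ α, T j i / 2 := by
            simp [Finset.sum_add_distrib]
        _ = (∑ i ∈ α, ∑ j ∈ α, T i j) / 2 + (∑ i ∈ α, ∑ j ∈ α, T j i) / 2 := by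
            simp [Finset.sum_div]
        _ = ∑ i ∈ α, ∑ j ∈ α, T i j := by rw [hsw]; ring
    constructor
    · intro α
      rw [hblockT α]
      calc ∑ i ∈ α, ∑ j ∈ α, T i j ≤ ∑ i ∈ α, ∑ j, T i j := by
            refine Finset.sum_le_sum fun i _ => ?_
            exact Finset.sum_le_sum_of_subset_of_nonneg (Finset.subset_univ α)
              (fun j _ _ => hT0 i j)
        _ = (α.card : ℝ) := by
            rw [Finset.sum_congr rfl fun i _ => hT1 i, Finset.sum_const, nsmul_eq_mul, mul_one]
    · rw [hblockT Finset.univ]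
      rw [Finset.sum_congr rfl fun i _ => hT1 i, Finset.sum_const, nsmul_eq_mul, mul_one,
        Finset.card_univ, Fintype.card_fin]
  · rintro ⟨hblock, htot⟩
    set K : Set (Fin m → Fin m → ℝ) :=
      {X | (∀ i j, 0 ≤ X i j) ∧ ∀ i j, X i j + X j i = 2 * A i j} with hK
    set f : (Fin m → Fin m → ℝ) → (Fin m → ℝ) := fun X i => ∑ j, X i j with hf
    suffices h : (fun _ => (1 : ℝ)) ∈ f '' K by
      obtain ⟨X, ⟨hX0, hXs⟩, hXr⟩ := h
      refine ⟨Matrix.of X, ⟨hX0, fun i => ?_⟩, ?_⟩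
      · exact congrFun hXr i
      · ext i j
        have h1 := hXs i j
        simp only [Matrix.smul_apply, Matrix.add_apply, Matrix.transpose_apply, smul_eq_mul,
          Matrix.of_apply]
        linarith
    by_contra hnot
    -- basic properties of K
    have hcont : ∀ i j, Continuous (fun X : Fin m → Fin m → ℝ => X i j) :=
      fun i j => (continuous_apply j).comp (continuous_apply i)
    have hKclosed : IsClosed K := by
      have : K = (⋂ i, ⋂ j, {X : Fin m → Fin m → ℝ | 0 ≤ X i j}) ∩
          (⋂ i, ⋂ j, {X : Fin m → Fin m → ℝ | X i j + X j i = 2 * A i j}) := by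
        ext X
        simp only [hK, Set.mem_setOf_eq, Set.mem_inter_iff, Set.mem_iInter]
      rw [this]
      exact IsClosed.inter
        (isClosed_iInter fun i => isClosed_iInter fun j =>
          isClosed_le continuous_const (hcont i j))
        (isClosed_iInter fun i => isClosed_iInter fun j =>
          isClosed_eq ((hcont i j).add (hcont j i)) continuous_const)
    have hKcomp : IsCompact K := by
      refine IsCompact.of_isClosed_subset
        (isCompact_univ_pi fun i => isCompact_univ_pi fun j => isCompact_Icc
          (a := (0:ℝ)) (b := 2 * A i j)) hKclosed ?_
      rintro X ⟨hX0, hXs⟩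
      intro i _
      intro j _
      exact ⟨hX0 i j, by have := hX0 j i; have := hXs i j; linarith⟩
    have hKconv : Convex ℝ K := by
      rintro X ⟨hX0, hXs⟩ Y ⟨hY0, hYs⟩ a b ha hb hab
      constructor
      · intro i j
        simp only [Pi.add_apply, Pi.smul_apply, smul_eq_mul]
        exact add_nonneg (mul_nonneg ha (hX0 i j)) (mul_nonneg hb (hY0 i j))
      · intro i j
        simp only [Pi.add_apply, Pi.smul_apply, smul_eq_mul]
        have h1 := hXs i j
        have h2 := hYs i j
        linear_combination a * h1 + b * h2 + 2 * A i j * hab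
    have hfcont : Continuous f :=
      continuous_pi fun i => continuous_finset_sum _ fun j _ => hcont i j
    have hCcomp : IsCompact (f '' K) := hKcomp.image hfcont
    have hCconv : Convex ℝ (f '' K) := by
      rintro _ ⟨X, hX, rfl⟩ _ ⟨Y, hY, rfl⟩ a b ha hb hab
      refine ⟨a • X + b • Y, hKconv hX hY ha hb hab, ?_⟩
      funext i
      simp [hf, Finset.mul_sum, Finset.sum_add_distrib]
    obtain ⟨g, s, hs1, hs2⟩ := geometric_hahn_banach_closed_point hCconv hCcomp.isClosed hnot
    set y : Fin m → ℝ := fun i => g (Pi.single i 1) with hy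
    have hg : ∀ z : Fin m → ℝ, g z = ∑ i, z i * y i := by
      intro z
      have hz : z = ∑ i, z i • (Pi.single i (1 : ℝ) : Fin m → ℝ) := by
        funext j
        simp [Finset.sum_apply, Pi.single_apply]
      conv_lhs => rw [hz]
      rw [map_sum]
      simp [smul_eq_mul]
      rfl
    -- the extreme matrix
    set X : Fin m → Fin m → ℝ :=
      fun i j => if y j < y i then 2 * A i j else if y i < y j then 0 else A i j with hX
    have hXK : X ∈ K := by
      constructor
      · intro i j
        simp only [hX]
        split_ifs
        · linarith [hpos i j]
        · exact le_rfl
        · exact hpos i j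
      · intro i j
        simp only [hX]
        rcases lt_trichotomy (y i) (y j) with h | h | h
        · rw [if_neg (asymm h), if_pos h, if_pos h, hsm i j]; ring
        · rw [if_neg (by rw [h]; exact lt_irrefl _), if_neg (by rw [h]; exact lt_irrefl _),
            if_neg (by rw [h]; exact lt_irrefl _), if_neg (by rw [h]; exact lt_irrefl _),
            hsm i j]; ring
        · rw [if_pos h, if_neg (asymm h), if_pos h]; ring
    have hdouble : ∑ i, ∑ j, y i * X i j = ∑ i, ∑ j, A i j * max (y i) (y j) := by
      have hswap : ∑ i, ∑ j, (fun i j => y j * X j i) i j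
          = ∑ i, ∑ j, (fun i j => y j * X j i) j i := Finset.sum_comm
      have h2 : (∑ i, ∑ j, y i * X i j) * 2
          = ∑ i, ∑ j, (y i * X i j + y j * X j i) := by
        rw [Finset.sum_congr rfl fun i (_ : i ∈ Finset.univ) => Finset.sum_add_distrib,
          Finset.sum_add_distrib]
        simp only at hswap
        rw [hswap]
        ring
      have hterm : ∀ i j, y i * X i j + y j * X j i = A i j * max (y i) (y j) * 2 := by
        intro i j
        simp only [hX]
        rcases lt_trichotomy (y i) (y j) with h | h | h
        · rw [if_neg (asymm h), if_pos h, if_pos h, hsm i j, max_eq_right h.le]; ring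
        · rw [if_neg (by rw [h]; exact lt_irrefl _), if_neg (by rw [h]; exact lt_irrefl _),
            if_neg (by rw [h]; exact lt_irrefl _), if_neg (by rw [h]; exact lt_irrefl _),
            hsm i j, h, max_self]; ring
        · rw [if_pos h, if_neg (asymm h), if_pos h, max_eq_left h.le]; ring
      have h3 : ∑ i, ∑ j, (y i * X i j + y j * X j i)
          = (∑ i, ∑ j, A i j * max (y i) (y j)) * 2 := by
        rw [Finset.sum_congr rfl fun i _ => Finset.sum_congr rfl fun j _ => hterm i j]
        simp [Finset.sum_mul]
      have := h2.trans h3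
      linarith
    have hineq : ∑ i, y i ≤ ∑ i, ∑ j, A i j * max (y i) (y j) :=
      key_aux m A hblock htot (Finset.univ.image y).card y le_rfl
    have hgone : g (fun _ => (1 : ℝ)) = ∑ i, y i := by
      rw [hg]; simp
    have hgX : g (f X) = ∑ i, ∑ j, y i * X i j := by
      rw [hg]
      simp only [hf]
      refine Finset.sum_congr rfl fun i _ => ?_
      rw [Finset.sum_mul]
      exact Finset.sum_congr rfl fun j _ => mul_comm _ _
    have hlt : g (f X) < s := hs1 _ ⟨X, hXK, rfl⟩
    have hlt2 : s < g (fun _ => (1 : ℝ)) := hs2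
    rw [hgX, hdouble] at hlt
    rw [hgone] at hlt2
    linarith
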